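/- Let G be a group, H a subgroup of G, and T a subgroup of H such that for every g ∈ G with g⁻¹Tg ⊆ H there exists h ∈ H with g⁻¹Tg = h⁻¹Th. Assume the Weyl group W_G = N_G(T)/T is finite. Then the set of fixed points of the left-translation action of T on G/H is finite, and its cardinality multiplied by the cardinality of W_H = N_H(T)/T equals the cardinality of W_G; that is, the number of fixed points equals |W_G|/|W_H|. -/

import Mathlib

/-- Under the conjugacy property of maximal tori, if the Weyl group
`W_G = N_G(T)/T` is finite, then the fixed-point set of the left-translation action of `T`
on `G/H` is finite and its cardinality times `|W_H|` equals `|W_G|`, where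
`W_H = N_H(T)/T` and `N_H(T) = H ⊓ N_G(T)`. -/
theorem card_fixed_points_eq_weyl_quotient {G : Type*} [Group G]
    (H T : Subgroup G) (hTH : T ≤ H)
    (hconj : ∀ g : G, (∀ t ∈ T, g⁻¹ * t * g ∈ H) →
      ∃ h ∈ H, (fun t => g⁻¹ * t * g) '' (T : Set G) = (fun t => h⁻¹ * t * h) '' (T : Set G))
    (hWG : Finite ((Subgroup.normalizer (T : Set G)) ⧸ T.subgroupOf (Subgroup.normalizer (T : Set G)))) :
    ({x : G ⧸ H | ∀ t ∈ T, (t : G) • x = x}).Finite ∧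
    Nat.card {x : G ⧸ H | ∀ t ∈ T, (t : G) • x = x} *
      Nat.card ((H ⊓ (Subgroup.normalizer (T : Set G)) : Subgroup G) ⧸ T.subgroupOf (H ⊓ (Subgroup.normalizer (T : Set G)))) =
      Nat.card ((Subgroup.normalizer (T : Set G)) ⧸ T.subgroupOf (Subgroup.normalizer (T : Set G))) := by
  classical
  set N := Subgroup.normalizer (T : Set G) with hNdef
  set K : Subgroup G := H ⊓ N with hKdef
  have hTN : T ≤ N := Subgroup.le_normalizer
  have hTK : T ≤ K := le_inf hTH hTN
  have hKN : K ≤ N := inf_le_right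
  set S : Set (G ⧸ H) := {x : G ⧸ H | ∀ t ∈ T, (t : G) • x = x} with hSdef
  -- the map from N ⧸ K.subgroupOf N into S
  have hmem : ∀ n : N, ((n : G) : G ⧸ H) ∈ S := by
    intro n t ht
    have h1 : t • ((n : G) : G ⧸ H) = ((t * (n : G) : G) : G ⧸ H) := rfl
    rw [h1, QuotientGroup.eq]
    have hn : (n : G)⁻¹ ∈ N := (N.inv_mem n.2)
    have := (Subgroup.mem_normalizer_iff.mp hn t⁻¹).mp (T.inv_mem ht)
    have h2 : (t * (n:G))⁻¹ * (n:G) = (n:G)⁻¹ * t⁻¹ * ((n:G)⁻¹)⁻¹ := by group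
    rw [h2]
    exact hTH this
  let f : (N ⧸ K.subgroupOf N) → S := fun q =>
    Quotient.liftOn' q (fun n => (⟨((n : G) : G ⧸ H), hmem n⟩ : S)) (by
      intro a b hab
      have hab' : (a : G)⁻¹ * b ∈ K := by
        rw [QuotientGroup.leftRel_apply] at hab
        exact hab
      exact Subtype.ext (QuotientGroup.eq.mpr hab'.1))
  have hfinj : Function.Injective f := by
    intro q₁ q₂
    induction q₁ using Quotient.inductionOn'
    induction q₂ using Quotient.inductionOn'
    rename_i a b
    intro h
    have h' : ((a : G) : G ⧸ H) = ((b : G) : G ⧸ H) := congrArg Subtype.val h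
    have hH : (a : G)⁻¹ * b ∈ H := QuotientGroup.eq.mp h'
    have hN' : (a : G)⁻¹ * b ∈ N := N.mul_mem (N.inv_mem a.2) b.2
    apply Quotient.sound'
    rw [QuotientGroup.leftRel_apply]
    exact Subgroup.mem_subgroupOf.mpr ⟨hH, hN'⟩
  have hfsurj : Function.Surjective f := by
    rintro ⟨x, hx⟩
    obtain ⟨g, rfl⟩ := QuotientGroup.mk_surjective x
    have hg : ∀ t ∈ T, g⁻¹ * t * g ∈ H := by
      intro t ht
      have := hx t⁻¹ (T.inv_mem ht)
      have h1 : (t⁻¹ : G) • ((g : G) : G ⧸ H) = ((t⁻¹ * g : G) : G ⧸ H) := rfl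
      rw [h1, QuotientGroup.eq] at this
      have h2 : (t⁻¹ * g)⁻¹ * g = g⁻¹ * t * g := by group
      rwa [h2] at this
    obtain ⟨h, hh, him⟩ := hconj g hg
    set n : G := g * h⁻¹ with hndef
    have hnN : n ∈ N := by
      rw [Subgroup.mem_normalizer_iff]
      intro t
      constructor
      · intro ht
        have : h⁻¹ * t * h ∈ (fun t => g⁻¹ * t * g) '' (T : Set G) := by
          rw [him]; exact ⟨t, ht, rfl⟩
        obtain ⟨s, hs, heq⟩ := this
        simp only [] at heq
        have : s = n * t * n⁻¹ := by
          have h4 : s = g * (g⁻¹ * s * g) * g⁻¹ := by group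
          rw [h4, heq, hndef]; group
        rwa [← this]
      · intro ht
        have : g⁻¹ * (n * t * n⁻¹) * g ∈ (fun t => h⁻¹ * t * h) '' (T : Set G) := by
          rw [← him]; exact ⟨n * t * n⁻¹, ht, rfl⟩
        obtain ⟨u, hu, heq⟩ := this
        have h3 : g⁻¹ * (n * t * n⁻¹) * g = h⁻¹ * t * h := by rw [hndef]; group
        simp only [] at heq
        rw [h3] at heq
        have : u = t := mul_left_cancel (mul_right_cancel heq)
        rwa [← this]
    refine ⟨Quotient.mk'' ⟨n, hnN⟩, ?_⟩
    apply Subtype.ext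
    show ((n : G) : G ⧸ H) = ((g : G) : G ⧸ H)
    rw [QuotientGroup.eq, hndef]
    have : (g * h⁻¹)⁻¹ * g = h := by group
    rw [this]; exact hh
  have hbij : Function.Bijective f := ⟨hfinj, hfsurj⟩
  -- finiteness of N ⧸ K.subgroupOf N
  have hWGcard : Nat.card (N ⧸ T.subgroupOf N) ≠ 0 :=
    Nat.card_ne_zero.mpr ⟨⟨(1 : N ⧸ T.subgroupOf N)⟩, hWG⟩
  have hrel : T.relIndex K * K.relIndex N = T.relIndex N :=
    Subgroup.relIndex_mul_relIndex T K N hTK hKN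
  have hTNrel : T.relIndex N = Nat.card (N ⧸ T.subgroupOf N) := rfl
  have hKNrel : K.relIndex N = Nat.card (N ⧸ K.subgroupOf N) := rfl
  have hTKrel : T.relIndex K = Nat.card (K ⧸ T.subgroupOf K) := rfl
  have hKNne : K.relIndex N ≠ 0 := by
    intro h0
    rw [← hrel, h0, mul_zero] at hTNrel
    exact hWGcard hTNrel.symm
  have hfinQ : Finite (N ⧸ K.subgroupOf N) := by
    rw [hKNrel] at hKNne
    exact (Nat.card_ne_zero.mp hKNne).2
  have hfinS : Finite S := Finite.of_surjective f hfsurj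
  refine ⟨Set.toFinite S, ?_⟩
  have hcardS : Nat.card S = Nat.card (N ⧸ K.subgroupOf N) :=
    (Nat.card_eq_of_bijective f hbij).symm
  rw [hcardS, ← hTNrel, ← hrel, ← hKNrel, ← hTKrel, mul_comm]
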